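/- Let allocation B be obtained by distributing ℓ = ⌊mk/n⌋ copies of each of n products among m customers (each customer at most one copy per product), terminating when total allocations reach T = ℓ·n. Then every product has exposure exactly ℓ, and hence every producer attains her maximin share ⌊mk/n⌋. -/
import Mathlib


/-- If ℓ = ⌊mk/n⌋ copies of each of the n products are fully allocated (each
customer holding at most one copy per product, total allocations ℓ·n), then
every product has exposure exactly ℓ, hence attains its maximin share ⌊mk/n⌋. -/
theorem full_allocation_gives_mms
    {m n k ℓ : ℕ} (hk : k < n) (hn : n ≤ m * k) (hℓ : ℓ = m * k / n)
    (A : Fin m → Finset (Fin n))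
    (hexp : ∀ p : Fin n,
      (Finset.univ.filter (fun u : Fin m => p ∈ A u)).card ≤ ℓ)
    (htotal : ∑ p : Fin n,
      (Finset.univ.filter (fun u : Fin m => p ∈ A u)).card = ℓ * n) :
    ∀ p : Fin n,
      (Finset.univ.filter (fun u : Fin m => p ∈ A u)).card = ℓ ∧
      m * k / n ≤ (Finset.univ.filter (fun u : Fin m => p ∈ A u)).card := by
  intro p
  have hcard : (Finset.univ.filter (fun u : Fin m => p ∈ A u)).card = ℓ := by
    by_contra h
    have hlt : (Finset.univ.filter (fun u : Fin m => p ∈ A u)).card < ℓ :=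
      lt_of_le_of_ne (hexp p) h
    have hsum : ∑ q : Fin n,
        (Finset.univ.filter (fun u : Fin m => q ∈ A u)).card < ∑ _q : Fin n, ℓ :=
      Finset.sum_lt_sum (fun q _ => hexp q) ⟨p, Finset.mem_univ p, hlt⟩
    simp only [Finset.sum_const, Finset.card_univ, Fintype.card_fin, smul_eq_mul, Nat.mul_comm n ℓ] at hsum
    omega
  exact ⟨hcard, by omega⟩
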